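/- For any prime q and any natural numbers n, m, a ≥ 1, S_n(m + q^(a+1)) ≡ S_n(m) (mod q^a). -/

import Mathlib

def S (n m : ℕ) : ℕ := ∑ i ∈ Finset.Icc 1 m, i ^ n

private lemma shiftA (n N : ℕ) : ∀ c : ℕ,
    (∑ j ∈ Finset.range N, (c + j) ^ n) ≡ (∑ j ∈ Finset.range N, j ^ n) [MOD N] := by
  intro c
  induction c with
  | zero => simp [Nat.ModEq.refl]
  | succ c ih =>
      have key : (∑ j ∈ Finset.range N, (c + 1 + j) ^ n) + c ^ n
          = (∑ j ∈ Finset.range N, (c + j) ^ n) + (c + N) ^ n := by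
        have h1 : (∑ j ∈ Finset.range (N + 1), (c + j) ^ n)
            = (∑ j ∈ Finset.range N, (c + j) ^ n) + (c + N) ^ n := by
          rw [Finset.sum_range_succ]
        have h2 : (∑ j ∈ Finset.range (N + 1), (c + j) ^ n)
            = (∑ j ∈ Finset.range N, (c + 1 + j) ^ n) + c ^ n := by
          rw [Finset.sum_range_succ']
          simp only [Nat.add_zero]
          congr 1
          apply Finset.sum_congr rfl
          intro x _
          ring_nf
        omega
      have hbase : (c + N) ≡ c [MOD N] := by
        simp [Nat.ModEq, Nat.add_mod_right]
      have hcN : (c + N) ^ n ≡ c ^ n [MOD N] := hbase.pow n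
      have : (∑ j ∈ Finset.range N, (c + 1 + j) ^ n) + c ^ n
          ≡ (∑ j ∈ Finset.range N, j ^ n) + c ^ n [MOD N] := by
        rw [key]
        exact ih.add hcN
      exact this.add_right_cancel' _

private lemma blockB (n N : ℕ) : ∀ t c : ℕ,
    (∑ j ∈ Finset.range (N * t), (c + j) ^ n)
      ≡ t * (∑ j ∈ Finset.range N, j ^ n) [MOD N] := by
  intro t
  induction t with
  | zero => simp [Nat.ModEq.refl]
  | succ t ih =>
      intro c
      have hsplit : (∑ j ∈ Finset.range (N * (t + 1)), (c + j) ^ n)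
          = (∑ j ∈ Finset.range (N * t), (c + j) ^ n)
            + ∑ j ∈ Finset.range N, (c + N * t + j) ^ n := by
        have : N * (t + 1) = N * t + N := by ring
        rw [this, Finset.sum_range_add]
        congr 1
        apply Finset.sum_congr rfl
        intro x _
        ring_nf
      rw [hsplit]
      have := (ih c).add (shiftA n N (c + N * t))
      calc (∑ j ∈ Finset.range (N * t), (c + j) ^ n)
            + ∑ j ∈ Finset.range N, (c + N * t + j) ^ n
          ≡ t * (∑ j ∈ Finset.range N, j ^ n) + ∑ j ∈ Finset.range N, j ^ n [MOD N] := this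
        _ = (t + 1) * (∑ j ∈ Finset.range N, j ^ n) := by ring

private lemma lemC (q n : ℕ) (hq : q.Prime) : ∀ k : ℕ,
    q ^ k ∣ ∑ i ∈ Finset.range (q ^ (k + 1)), i ^ n := by
  intro k
  induction k with
  | zero => simp
  | succ k ih =>
      have h1 : (∑ i ∈ Finset.range (q ^ (k + 2)), i ^ n)
          ≡ q * (∑ i ∈ Finset.range (q ^ (k + 1)), i ^ n) [MOD q ^ (k + 1)] := by
        have hpow : q ^ (k + 2) = q ^ (k + 1) * q := by ring
        have := blockB n (q ^ (k + 1)) q 0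
        simpa [hpow] using this
      obtain ⟨s, hs⟩ := ih
      have h2 : q ^ (k + 1) ∣ q * (∑ i ∈ Finset.range (q ^ (k + 1)), i ^ n) := by
        rw [hs]
        exact ⟨s, by ring⟩
      exact Nat.modEq_zero_iff_dvd.mp (h1.trans (Nat.modEq_zero_iff_dvd.mpr h2))

theorem stmt7 (q n m a : ℕ) (hq : q.Prime) (hn : 1 ≤ n) (hm : 1 ≤ m) (ha : 1 ≤ a) :
    S n (m + q ^ (a + 1)) ≡ S n m [MOD q ^ a] := by
  have hrange : ∀ M : ℕ, S n M = ∑ j ∈ Finset.range M, (1 + j) ^ n := by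
    intro M
    unfold S
    rw [show Finset.Icc 1 M = Finset.Ico 1 (M + 1) from rfl, Finset.sum_Ico_eq_sum_range]
    simp
  have hsplit : S n (m + q ^ (a + 1))
      = S n m + ∑ j ∈ Finset.range (q ^ (a + 1)), (m + 1 + j) ^ n := by
    rw [hrange, hrange, Finset.sum_range_add]
    congr 1
    apply Finset.sum_congr rfl
    intro x _
    ring_nf
  have hdvd : q ^ a ∣ ∑ j ∈ Finset.range (q ^ (a + 1)), (m + 1 + j) ^ n := by
    have hb : (∑ j ∈ Finset.range (q ^ a * q), (m + 1 + j) ^ n)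
        ≡ q * (∑ j ∈ Finset.range (q ^ a), j ^ n) [MOD q ^ a] := blockB n (q ^ a) q (m + 1)
    have hpow : q ^ (a + 1) = q ^ a * q := by ring
    obtain ⟨s, hs⟩ := lemC q n hq (a - 1)
    rw [show a - 1 + 1 = a from by omega] at hs
    have h2 : q ^ a ∣ q * (∑ j ∈ Finset.range (q ^ a), j ^ n) := by
      have hqa : q ^ a = q * q ^ (a - 1) := by
        rw [← pow_succ', Nat.sub_add_cancel ha]
      rw [hs, hqa]
      exact ⟨s, by ring⟩
    rw [hpow]
    exact Nat.modEq_zero_iff_dvd.mp (hb.trans (Nat.modEq_zero_iff_dvd.mpr h2))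
  rw [hsplit]
  calc S n m + ∑ j ∈ Finset.range (q ^ (a + 1)), (m + 1 + j) ^ n
      ≡ S n m + 0 [MOD q ^ a] := (Nat.ModEq.refl _).add (Nat.modEq_zero_iff_dvd.mpr hdvd)
    _ = S n m := by ring
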